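/- Let X ⊆ Y be infinite sets and l_X = (Fm_Σ(X), ⊢) a logic, and suppose that either |X| = |Y| or card(l_X) ≤ |X|⁺ (the successor cardinal of |X|). Then l_X has at most one natural extension to Fm_Σ(Y): if ⊢₁ and ⊢₂ are both logics on Fm_Σ(Y) that are conservative extensions of l_X of the same cardinality as l_X, then ⊢₁ = ⊢₂. -/

import Mathlib

universe u v w

open FirstOrder FirstOrder.Language

/-- A relation between subsets and elements of `A` is `μ`-ary. -/
def KAry {A : Type*} (μ : Cardinal) (r : Set A → A → Prop) : Prop :=
  ∀ (Γ : Set A) (φ : A), r Γ φ → ∃ Γ' ⊆ Γ, Cardinal.mk ↥Γ' < μ ∧ r Γ' φ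

/-- `r` is a logic on `Fm_Σ(W)`: reflexive, monotone, satisfying cut, structural. -/
def IsLogicOn {L : FirstOrder.Language} {W : Type*}
    (r : Set (L.Term W) → L.Term W → Prop) : Prop :=
  (∀ (Γ : Set (L.Term W)) (φ : L.Term W), φ ∈ Γ → r Γ φ) ∧
  (∀ (Γ Δ : Set (L.Term W)) (φ : L.Term W), Γ ⊆ Δ → r Γ φ → r Δ φ) ∧
  (∀ (Γ Δ : Set (L.Term W)) (φ : L.Term W), r Γ φ → (∀ ψ ∈ Γ, r Δ ψ) → r Δ φ) ∧
  (∀ (σ : W → L.Term W) (Γ : Set (L.Term W)) (φ : L.Term W),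
      r Γ φ → r ((fun t : L.Term W => t.subst σ) '' Γ) (φ.subst σ))

namespace Stmt17Aux

/-- The set of variables occurring in a term. -/
def tvars {L : FirstOrder.Language.{u, v}} {α : Type w} : L.Term α → Set α
  | .var y => {y}
  | .func _ ts => ⋃ i, tvars (ts i)

lemma tvars_finite {L : FirstOrder.Language.{u, v}} {α : Type w} (t : L.Term α) :
    (tvars t).Finite := by
  induction t with
  | var y => exact Set.finite_singleton y
  | func f ts ih => exact Set.finite_iUnion ih

lemma subst_var_comp {L : FirstOrder.Language.{u, v}} {α : Type w} (h : α → α)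
    (t : L.Term α) : t.subst (fun y => Term.var (h y)) = t.relabel h := by
  induction t with
  | var y => rfl
  | func f ts ih => simp only [Term.subst, Term.relabel]; exact congrArg _ (funext ih)

lemma subst_subst_eq_self {L : FirstOrder.Language.{u, v}} {α : Type w}
    (σ τ : α → L.Term α) (V : Set α)
    (hστ : ∀ y ∈ V, (σ y).subst τ = Term.var y)
    (t : L.Term α) (ht : tvars t ⊆ V) : (t.subst σ).subst τ = t := by
  induction t with
  | var y => exact hστ y (ht rfl)
  | func f ts ih =>
    simp only [Term.subst]
    refine congrArg _ (funext fun i => ih i ?_)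
    exact fun y hy => ht (Set.mem_iUnion.mpr ⟨i, hy⟩)

/-- The key renaming lemma: if the variables of `Γ ∪ {φ}` embed into `X`, then
derivability of `φ` from `Γ` in `r₁` transfers to `r₂`. -/
lemma bridge {L : FirstOrder.Language.{u, v}} {X Y : Type w} [Nonempty X]
    (em : X → Y) (hem : Function.Injective em)
    (rX : Set (L.Term X) → L.Term X → Prop)
    (r₁ r₂ : Set (L.Term Y) → L.Term Y → Prop)
    (hl₁ : IsLogicOn r₁) (hl₂ : IsLogicOn r₂)
    (hcons₁ : ∀ (Γ : Set (L.Term X)) (φ : L.Term X),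
        rX Γ φ ↔ r₁ (Term.relabel em '' Γ) (Term.relabel em φ))
    (hcons₂ : ∀ (Γ : Set (L.Term X)) (φ : L.Term X),
        rX Γ φ ↔ r₂ (Term.relabel em '' Γ) (Term.relabel em φ))
    (Γ : Set (L.Term Y)) (φ : L.Term Y) (V : Set Y)
    (hVφ : tvars φ ⊆ V) (hVΓ : ∀ t ∈ Γ, tvars t ⊆ V)
    (j : ↥V ↪ X) (h₁ : r₁ Γ φ) : r₂ Γ φ := by
  classical
  -- the renaming into (the image of) `X`
  set g : Y → X := fun y => if h : y ∈ V then j ⟨y, h⟩ else Classical.arbitrary X with hg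
  set σ : Y → L.Term Y := fun y => Term.var (em (g y)) with hσ
  -- the renaming back
  set τ : Y → L.Term Y :=
    fun y => if h : ∃ v : ↥V, em (g v.1) = y then Term.var h.choose.1 else Term.var y with hτ
  have hστ : ∀ y ∈ V, (σ y).subst τ = Term.var y := by
    intro y hy
    have hex : ∃ v : ↥V, em (g v.1) = em (g y) := ⟨⟨y, hy⟩, rfl⟩
    have hch : em (g hex.choose.1) = em (g y) := hex.choose_spec
    have h1 : g hex.choose.1 = g y := hem hch
    have h2 : j hex.choose = j ⟨y, hy⟩ := by
      have e1 : g hex.choose.1 = j hex.choose := by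
        simp only [hg, dif_pos hex.choose.2]
      have e2 : g y = j ⟨y, hy⟩ := by simp only [hg, dif_pos hy]
      rw [← e1, ← e2]; exact h1
    have h3 : hex.choose = (⟨y, hy⟩ : ↥V) := j.injective h2
    show τ (em (g y)) = Term.var y
    rw [hτ]
    simp only [dif_pos hex, h3]
  -- substitution by σ equals relabelling along `em ∘ g`
  have hsubstσ : (fun t : L.Term Y => t.subst σ) =
      (Term.relabel em ∘ Term.relabel g : L.Term Y → L.Term Y) := by
    funext t
    rw [show t.subst σ = t.relabel (em ∘ g) from subst_var_comp (em ∘ g) t]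
    exact (Term.relabel_relabel g em t).symm
  -- push forward along σ in r₁
  have h₁' := hl₁.2.2.2 σ Γ φ h₁
  rw [hsubstσ, Set.image_comp] at h₁'
  have hX : rX (Term.relabel g '' Γ) (Term.relabel g φ) := by
    rw [hcons₁]
    have : φ.subst σ = Term.relabel em (Term.relabel g φ) := by
      rw [show φ.subst σ = (Term.relabel em ∘ Term.relabel g) φ from congrFun hsubstσ φ]
      rfl
    rwa [this] at h₁'
  have h₂' : r₂ ((fun t : L.Term Y => t.subst σ) '' Γ) (φ.subst σ) := by
    have := (hcons₂ _ _).mp hX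
    rw [hsubstσ, Set.image_comp]
    rwa [show φ.subst σ = Term.relabel em (Term.relabel g φ) by
      rw [show φ.subst σ = (Term.relabel em ∘ Term.relabel g) φ from congrFun hsubstσ φ]; rfl]
  -- pull back along τ in r₂
  have h₂'' := hl₂.2.2.2 τ _ _ h₂'
  have himg : (fun t : L.Term Y => t.subst τ) '' ((fun t : L.Term Y => t.subst σ) '' Γ) = Γ := by
    rw [← Set.image_comp]
    have : ∀ t ∈ Γ, ((fun t : L.Term Y => t.subst τ) ∘ fun t : L.Term Y => t.subst σ) t = t :=
      fun t ht => subst_subst_eq_self σ τ V hστ t (hVΓ t ht)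
    calc ((fun t : L.Term Y => t.subst τ) ∘ fun t : L.Term Y => t.subst σ) '' Γ
        = id '' Γ := Set.image_congr (fun t ht => this t ht)
      _ = Γ := Set.image_id Γ
  have hφeq : (φ.subst σ).subst τ = φ := subst_subst_eq_self σ τ V hστ φ hVφ
  rwa [himg, hφeq] at h₂''

end Stmt17Aux

/-- Cintula–Noguera: if `|X| = |Y|` or `card(l_X) ≤ |X|⁺`, then `l_X`
has at most one natural extension to `Fm_Σ(Y)`: any two logics on `Fm_Σ(Y)` that are
conservative extensions of `l_X` of the same cardinality as `l_X` are equal. -/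
theorem stmt_17 {L : FirstOrder.Language.{u, v}} {X Y : Type w}
    [Infinite X] [Infinite Y]
    (em : X → Y) (hem : Function.Injective em)
    (rX : Set (L.Term X) → L.Term X → Prop) (hlX : IsLogicOn rX)
    (hcond : Cardinal.mk X = Cardinal.mk Y ∨
        KAry (Order.succ (Cardinal.lift.{u} (Cardinal.mk X))) rX)
    (r₁ r₂ : Set (L.Term Y) → L.Term Y → Prop)
    (hl₁ : IsLogicOn r₁) (hl₂ : IsLogicOn r₂)
    -- both are conservative extensions of l_X
    (hcons₁ : ∀ (Γ : Set (L.Term X)) (φ : L.Term X),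
        rX Γ φ ↔ r₁ (Term.relabel em '' Γ) (Term.relabel em φ))
    (hcons₂ : ∀ (Γ : Set (L.Term X)) (φ : L.Term X),
        rX Γ φ ↔ r₂ (Term.relabel em '' Γ) (Term.relabel em φ))
    -- both have the same cardinality as l_X
    (hsame₁ : ∀ μ : Cardinal.{max u w}, Cardinal.aleph0 ≤ μ → (KAry μ rX ↔ KAry μ r₁))
    (hsame₂ : ∀ μ : Cardinal.{max u w}, Cardinal.aleph0 ≤ μ → (KAry μ rX ↔ KAry μ r₂)) :
    r₁ = r₂ := by
  classical
  -- a general one-directional transfer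
  have oneway : ∀ (s₁ s₂ : Set (L.Term Y) → L.Term Y → Prop),
      IsLogicOn s₁ → IsLogicOn s₂ →
      (∀ (Γ : Set (L.Term X)) (φ : L.Term X),
        rX Γ φ ↔ s₁ (Term.relabel em '' Γ) (Term.relabel em φ)) →
      (∀ (Γ : Set (L.Term X)) (φ : L.Term X),
        rX Γ φ ↔ s₂ (Term.relabel em '' Γ) (Term.relabel em φ)) →
      (∀ μ : Cardinal.{max u w}, Cardinal.aleph0 ≤ μ → (KAry μ rX ↔ KAry μ s₁)) →
      ∀ (Γ : Set (L.Term Y)) (φ : L.Term Y), s₁ Γ φ → s₂ Γ φ := by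
    intro s₁ s₂ hls₁ hls₂ hconss₁ hconss₂ hsames₁ Γ φ h
    rcases hcond with hXY | hK
    · -- |X| = |Y| : no cardinality restriction needed
      obtain ⟨e⟩ := Cardinal.eq.mp hXY.symm
      refine Stmt17Aux.bridge em hem rX s₁ s₂ hls₁ hls₂ hconss₁ hconss₂ Γ φ Set.univ
        (Set.subset_univ _) (fun _ _ => Set.subset_univ _)
        ⟨fun v => e v.1, fun a b hab => Subtype.ext (e.injective hab)⟩ h
    · -- card(l_X) ≤ |X|⁺
      have haleph : Cardinal.aleph0 ≤ Order.succ (Cardinal.lift.{u} (Cardinal.mk X)) :=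
        le_trans (by rw [Cardinal.aleph0_le_lift]; exact Cardinal.aleph0_le_mk X)
          (Order.le_succ _)
      have hK₁ : KAry (Order.succ (Cardinal.lift.{u} (Cardinal.mk X))) s₁ :=
        (hsames₁ _ haleph).mp hK
      obtain ⟨Γ', hΓ'sub, hΓ'card, hΓ'⟩ := hK₁ Γ φ h
      have hΓ'le : Cardinal.mk ↥Γ' ≤ Cardinal.lift.{u} (Cardinal.mk X) :=
        Order.lt_succ_iff.mp hΓ'card
      -- the set of variables occurring in Γ' ∪ {φ}
      set Γ'' : Set (L.Term Y) := insert φ Γ' with hΓ''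
      set V : Set Y := ⋃ t : ↥Γ'', Stmt17Aux.tvars t.1 with hV
      have hΓ''card : Cardinal.mk ↥Γ'' ≤ Cardinal.lift.{u} (Cardinal.mk X) := by
        refine le_trans Cardinal.mk_insert_le (le_trans (add_le_add_left hΓ'le 1) ?_)
        rw [Cardinal.add_one_eq (by rw [Cardinal.aleph0_le_lift]; exact Cardinal.aleph0_le_mk X)]
      -- cardinality bound on V
      have hVle : Cardinal.mk ↥V ≤ Cardinal.mk X := by
        rw [← Cardinal.lift_le.{max u w}]
        have hne : Nonempty ↥Γ'' := ⟨⟨φ, Set.mem_insert _ _⟩⟩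
        have h1 := Cardinal.mk_iUnion_le_lift (fun t : ↥Γ'' => Stmt17Aux.tvars t.1)
        have h2 : (⨆ t : ↥Γ'', Cardinal.lift.{max u w}
            (Cardinal.mk ↥(Stmt17Aux.tvars t.1))) ≤ Cardinal.aleph0 := by
          refine ciSup_le' fun t => ?_
          have : Cardinal.mk ↥(Stmt17Aux.tvars t.1) < Cardinal.aleph0 := by
            have := (Stmt17Aux.tvars_finite t.1).to_subtype
            exact Cardinal.lt_aleph0_of_finite _
          calc Cardinal.lift.{max u w} (Cardinal.mk ↥(Stmt17Aux.tvars t.1))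
              ≤ Cardinal.lift.{max u w} Cardinal.aleph0 := Cardinal.lift_le.mpr this.le
            _ = Cardinal.aleph0 := Cardinal.lift_aleph0
        have h3 : Cardinal.lift.{w} (Cardinal.mk ↥Γ'') ≤
            Cardinal.lift.{max u w} (Cardinal.mk X) := by
          calc Cardinal.lift.{w} (Cardinal.mk ↥Γ'')
              ≤ Cardinal.lift.{w} (Cardinal.lift.{u} (Cardinal.mk X)) :=
                Cardinal.lift_le.mpr hΓ''card
            _ = Cardinal.lift.{max u w} (Cardinal.mk X) := Cardinal.lift_lift _
        calc Cardinal.lift.{max u w} (Cardinal.mk ↥V)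
            ≤ Cardinal.lift.{w} (Cardinal.mk ↥Γ'') * ⨆ t : ↥Γ'',
                Cardinal.lift.{max u w} (Cardinal.mk ↥(Stmt17Aux.tvars t.1)) := h1
          _ ≤ Cardinal.lift.{max u w} (Cardinal.mk X) * Cardinal.aleph0 :=
                mul_le_mul' h3 h2
          _ = Cardinal.lift.{max u w} (Cardinal.mk X) :=
                Cardinal.mul_aleph0_eq (by
                  rw [Cardinal.aleph0_le_lift]; exact Cardinal.aleph0_le_mk X)
      obtain ⟨j⟩ := Cardinal.le_def _ _ |>.mp hVle
      have hΓ'φ : s₂ Γ' φ := by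
        refine Stmt17Aux.bridge em hem rX s₁ s₂ hls₁ hls₂ hconss₁ hconss₂ Γ' φ V
          (fun y hy => Set.mem_iUnion.mpr ⟨⟨φ, Set.mem_insert _ _⟩, hy⟩)
          (fun t ht y hy => Set.mem_iUnion.mpr ⟨⟨t, Set.mem_insert_of_mem _ ht⟩, hy⟩) j hΓ'
      exact hls₂.2.1 Γ' Γ φ hΓ'sub hΓ'φ
  funext Γ φ
  exact propext ⟨oneway r₁ r₂ hl₁ hl₂ hcons₁ hcons₂ hsame₁ Γ φ,
    oneway r₂ r₁ hl₂ hl₁ hcons₂ hcons₁ hsame₂ Γ φ⟩
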